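/- If the elements q_1 < ... < q_t of Q form a well-based sequence, then the generating function of S_n (the number of subsets of {1,...,n} with no two elements differing by an element of Q) is G(x) = c / ((1-x)c - x), where c = 1 + Σ_{i=1}^t x^{q_i}. -/

import Mathlib

/-- A set `Q` of positive integers is well-based if `1 ∈ Q` and for every `b ∈ Q` and
every `Δ` with `1 ≤ Δ ≤ b - 1` there is some `a ∈ Q` with `b = a + Δ`. -/
def WellBased (Q : Finset ℕ) : Prop :=
  1 ∈ Q ∧ ∀ b ∈ Q, ∀ d, 1 ≤ d → d < b → ∃ a ∈ Q, b = a + d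

open Finset

def Pp (Q : Finset ℕ) (A : Finset ℕ) : Prop := ∀ x ∈ A, ∀ y ∈ A, x < y → y - x ∉ Q

instance (Q : Finset ℕ) : DecidablePred (Pp Q) := fun A => by unfold Pp; infer_instance

def Vv (Q : Finset ℕ) (n : ℕ) : Finset (Finset ℕ) :=
  (Finset.Icc 1 n).powerset.filter (Pp Q)

def Ww (Q : Finset ℕ) (n : ℕ) : Finset (Finset ℕ) :=
  (Vv Q n).filter (fun A => n ∈ A)

lemma mem_Vv {Q : Finset ℕ} {n : ℕ} {A : Finset ℕ} :
    A ∈ Vv Q n ↔ A ⊆ Finset.Icc 1 n ∧ Pp Q A := by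
  simp [Vv]

lemma mem_Ww {Q : Finset ℕ} {n : ℕ} {A : Finset ℕ} :
    A ∈ Ww Q n ↔ A ⊆ Finset.Icc 1 n ∧ Pp Q A ∧ n ∈ A := by
  simp [Ww, mem_Vv]; tauto

lemma cardV0 (Q : Finset ℕ) : (Vv Q 0).card = 1 := by
  have : Vv Q 0 = {∅} := by
    ext A
    simp [mem_Vv, Finset.subset_empty]
    intro h; subst h; intro x hx; simp at hx
  simp [this]

lemma cardV_succ (Q : Finset ℕ) (n : ℕ) :
    (Vv Q (n+1)).card = (Vv Q n).card + (Ww Q (n+1)).card := by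
  have h1 : (Vv Q (n+1)).filter (fun A => (n+1) ∉ A) = Vv Q n := by
    ext A
    simp only [Finset.mem_filter, mem_Vv]
    constructor
    · rintro ⟨⟨hsub, hp⟩, hnot⟩
      refine ⟨fun x hx => ?_, hp⟩
      have hx2 := hsub hx
      simp only [Finset.mem_Icc] at hx2 ⊢
      have : x ≠ n+1 := fun h => hnot (h ▸ hx)
      omega
    · rintro ⟨hsub, hp⟩
      have hn : n + 1 ∉ A := fun hmem => by
        have := hsub hmem; simp only [Finset.mem_Icc] at this; omega
      refine ⟨⟨fun x hx => ?_, hp⟩, hn⟩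
      have := hsub hx; simp only [Finset.mem_Icc] at this ⊢; omega
  have h3 := Finset.card_filter_add_card_filter_not
    (s := Vv Q (n+1)) (p := fun A => (n+1) ∈ A)
  have h4 : ((Vv Q (n+1)).filter (fun a => ¬ (n+1) ∈ a)).card = (Vv Q n).card := by
    rw [← h1]
  have h5 : ((Vv Q (n+1)).filter (fun A => (n+1) ∈ A)).card = (Ww Q (n+1)).card := rfl
  omega

lemma cardB (Q : Finset ℕ) (hQpos : ∀ x ∈ Q, 0 < x) (hwb : WellBased Q) (m : ℕ) :
    (Vv Q m).card = (Ww Q (m+1)).card + ∑ q ∈ Q.filter (· ≤ m), (Ww Q (m+1-q)).card := by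
  classical
  set good := (Vv Q m).filter (fun A => ∀ x ∈ A, (m+1) - x ∉ Q) with hgood
  set bad := (Vv Q m).filter (fun A => ∃ x ∈ A, (m+1) - x ∈ Q) with hbad
  have hsplit : (Vv Q m).card = good.card + bad.card := by
    have h3 := Finset.card_filter_add_card_filter_not
      (s := Vv Q m) (p := fun A => ∃ x ∈ A, (m+1) - x ∈ Q)
    have h4 : (Vv Q m).filter (fun a => ¬ ∃ x ∈ a, (m+1) - x ∈ Q) = good := by
      apply Finset.filter_congr
      intro A _
      push_neg
      rfl
    have h5 : (Vv Q m).filter (fun A => ∃ x ∈ A, (m+1) - x ∈ Q) = bad := rfl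
    rw [h4, h5] at h3
    omega
  have hgoodcard : good.card = (Ww Q (m+1)).card := by
    apply Finset.card_bij (fun A _ => insert (m+1) A)
    · intro A hA
      rw [hgood, Finset.mem_filter, mem_Vv] at hA
      obtain ⟨⟨hsub, hp⟩, hq⟩ := hA
      have hnm : (m+1) ∉ A := fun h => by
        have := hsub h; simp only [Finset.mem_Icc] at this; omega
      rw [mem_Ww]
      refine ⟨?_, ?_, Finset.mem_insert_self _ _⟩
      · intro x hx
        rcases Finset.mem_insert.mp hx with h | h
        · simp [h]
        · have := hsub h; simp only [Finset.mem_Icc] at this ⊢; omega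
      · intro x hx y hy hxy
        rcases Finset.mem_insert.mp hx with h | h
        · subst h
          rcases Finset.mem_insert.mp hy with h' | h'
          · omega
          · have := hsub h'; simp only [Finset.mem_Icc] at this; omega
        · rcases Finset.mem_insert.mp hy with h' | h'
          · subst h'; exact hq x h
          · exact hp x h y h' hxy
    · intro A hA B hB hAB
      rw [hgood, Finset.mem_filter, mem_Vv] at hA hB
      have hnA : (m+1) ∉ A := fun h => by
        have := hA.1.1 h; simp only [Finset.mem_Icc] at this; omega
      have hnB : (m+1) ∉ B := fun h => by
        have := hB.1.1 h; simp only [Finset.mem_Icc] at this; omega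
      have := congrArg (fun s => Finset.erase s (m+1)) hAB
      simpa [Finset.erase_insert, hnA, hnB] using this
    · intro B hB
      rw [mem_Ww] at hB
      obtain ⟨hsub, hp, hmem⟩ := hB
      refine ⟨B.erase (m+1), ?_, ?_⟩
      · rw [hgood, Finset.mem_filter, mem_Vv]
        refine ⟨⟨?_, ?_⟩, ?_⟩
        · intro x hx
          obtain ⟨hne, hxB⟩ := Finset.mem_erase.mp hx
          have := hsub hxB; simp only [Finset.mem_Icc] at this ⊢; omega
        · intro x hx y hy hxy
          exact hp x (Finset.mem_erase.mp hx).2 y (Finset.mem_erase.mp hy).2 hxy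
        · intro x hx hQ
          obtain ⟨hne, hxB⟩ := Finset.mem_erase.mp hx
          have hxle := hsub hxB; simp only [Finset.mem_Icc] at hxle
          have hlt : x < m+1 := by omega
          exact hp x hxB (m+1) hmem hlt hQ
      · exact Finset.insert_erase hmem
  have hbadcard : bad = (Q.filter (· ≤ m)).biUnion (fun q => Ww Q (m+1-q)) := by
    ext A
    simp only [hbad, Finset.mem_filter, Finset.mem_biUnion, mem_Vv, mem_Ww]
    constructor
    · rintro ⟨⟨hsub, hp⟩, x, hxA, hxQ⟩
      have hxle := hsub hxA; simp only [Finset.mem_Icc] at hxle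
      refine ⟨(m+1) - x, ⟨hxQ, by omega⟩, ?_, hp, ?_⟩
      · intro y hy
        have hyle := hsub hy; simp only [Finset.mem_Icc] at hyle
        simp only [Finset.mem_Icc]
        refine ⟨hyle.1, ?_⟩
        by_contra hc
        push_neg at hc
        -- y > m+1-(m+1-x) = x
        have hyx : x < y := by omega
        have hd1 : 1 ≤ (m+1) - y := by omega
        have hd2 : (m+1) - y < (m+1) - x := by omega
        obtain ⟨a, haQ, ha⟩ := hwb.2 _ hxQ _ hd1 hd2
        have : a = y - x := by omega
        exact hp x hxA y hy hyx (this ▸ haQ)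
      · have : m + 1 - ((m+1) - x) = x := by omega
        rw [this]; exact hxA
    · rintro ⟨q, hq, hsub, hp, hmem⟩
      have hq1 : 0 < q := hQpos q hq.1
      refine ⟨⟨?_, hp⟩, m+1-q, hmem, ?_⟩
      · intro y hy
        have := hsub hy; simp only [Finset.mem_Icc] at this ⊢; omega
      · have : m + 1 - (m + 1 - q) = q := by omega
        rw [this]; exact hq.1
  have hdisj : ∀ q ∈ Q.filter (· ≤ m), ∀ q' ∈ Q.filter (· ≤ m), q ≠ q' →
      Disjoint (Ww Q (m+1-q)) (Ww Q (m+1-q')) := by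
    intro q hq q' hq' hne
    have hqm := Finset.mem_filter.mp hq
    have hq'm := Finset.mem_filter.mp hq'
    rw [Finset.disjoint_left]
    intro A hA hA'
    rw [mem_Ww] at hA hA'
    have h1 := hA'.1 hA.2.2
    have h2 := hA.1 hA'.2.2
    simp only [Finset.mem_Icc] at h1 h2
    have hq2 : q ≤ m := hqm.2
    have hq'2 : q' ≤ m := hq'm.2
    omega
  rw [hsplit, hgoodcard, hbadcard, Finset.card_biUnion hdisj]


/-- If the elements of `Q` form a well-based sequence then the generating function of
`S_n`, the number of subsets of `{1,...,n}` with no two elements differing by an element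
of `Q`, is `G(x) = c / ((1-x)c - x)` where `c = 1 + Σ_{i ∈ Q} x^i`. -/
theorem stmt_12 (Q : Finset ℕ) (hQpos : ∀ x ∈ Q, 0 < x) (hwb : WellBased Q)
    (S : ℕ → ℕ)
    (hS : ∀ n, S n = ((Finset.Icc 1 n).powerset.filter
      (fun A => ∀ x ∈ A, ∀ y ∈ A, x < y → y - x ∉ Q)).card) :
    PowerSeries.mk (fun n : ℕ => (S n : ℚ)) =
      (1 + ∑ i ∈ Q, (PowerSeries.X : PowerSeries ℚ) ^ i) *
        ((1 - PowerSeries.X) * (1 + ∑ i ∈ Q, (PowerSeries.X : PowerSeries ℚ) ^ i)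
          - PowerSeries.X)⁻¹ := by
  classical
  have hSV : ∀ n, S n = (Vv Q n).card := by
    intro n
    rw [hS]
    congr 1
  have hS0 : S 0 = 1 := by rw [hSV]; exact cardV0 Q
  have recS : ∀ n, S (n+1) = S n + (Ww Q (n+1)).card := by
    intro n; rw [hSV, hSV, cardV_succ]
  have recB : ∀ m, S m = (Ww Q (m+1)).card + ∑ q ∈ Q.filter (· ≤ m), (Ww Q (m+1-q)).card := by
    intro m; rw [hSV]; exact cardB Q hQpos hwb m
  set X : PowerSeries ℚ := PowerSeries.X
  set c : PowerSeries ℚ := 1 + ∑ i ∈ Q, X ^ i with hc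
  have hc0 : PowerSeries.constantCoeff ((1 - X) * c - X) = 1 := by
    have hz : ∀ i ∈ Q, PowerSeries.constantCoeff (X ^ i) = 0 := by
      intro i hi
      rw [map_pow, PowerSeries.constantCoeff_X, zero_pow (Nat.pos_iff_ne_zero.mp (hQpos i hi))]
    rw [map_sub, map_mul, map_sub, map_one, hc, map_add, map_one, map_sum,
      Finset.sum_eq_zero hz, PowerSeries.constantCoeff_X]
    ring
  rw [PowerSeries.eq_mul_inv_iff_mul_eq (by rw [hc0]; norm_num)]
  set Tq : ℕ → ℚ := fun n => if n = 0 then 1 else ((Ww Q n).card : ℚ) with hTq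
  have hTU : PowerSeries.mk (fun n : ℕ => (S n : ℚ)) * (1 - X) = PowerSeries.mk Tq := by
    ext n
    rw [mul_sub, mul_one, map_sub, PowerSeries.coeff_mk]
    cases n with
    | zero =>
      rw [PowerSeries.coeff_zero_mul_X, PowerSeries.coeff_mk]
      simp [hTq, hS0]
    | succ k =>
      rw [PowerSeries.coeff_succ_mul_X, PowerSeries.coeff_mk, PowerSeries.coeff_mk]
      have := recS k
      simp only [hTq, Nat.succ_ne_zero, if_false]
      push_cast [this]
      ring
  calc PowerSeries.mk (fun n : ℕ => (S n : ℚ)) * ((1 - X) * c - X)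
      = (PowerSeries.mk (fun n : ℕ => (S n : ℚ)) * (1 - X)) * c
        - PowerSeries.mk (fun n : ℕ => (S n : ℚ)) * X := by ring
    _ = PowerSeries.mk Tq * c - PowerSeries.mk (fun n : ℕ => (S n : ℚ)) * X := by rw [hTU]
    _ = c := by
        ext n
        rw [map_sub, hc, mul_add, mul_one, map_add, Finset.mul_sum, map_sum]
        have hcoeff : ∀ i ∈ Q, (PowerSeries.coeff n) (PowerSeries.mk Tq * X ^ i) =
            if i ≤ n then Tq (n - i) else 0 := by
          intro i hi
          rw [PowerSeries.coeff_mul_X_pow', PowerSeries.coeff_mk]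
        rw [Finset.sum_congr rfl hcoeff, Finset.sum_ite, Finset.sum_const_zero, add_zero,
          PowerSeries.coeff_mk]
        have hrhs : (PowerSeries.coeff n) (1 + ∑ i ∈ Q, X ^ i) =
            (if n = 0 then 1 else 0) + (if n ∈ Q then (1:ℚ) else 0) := by
          rw [map_add, map_sum, PowerSeries.coeff_one]
          congr 1
          rw [Finset.sum_congr rfl (fun i _ => PowerSeries.coeff_X_pow n i),
            Finset.sum_ite_eq Q n (fun _ => (1:ℚ))]
        rw [hrhs]
        cases n with
        | zero =>
          rw [PowerSeries.coeff_zero_mul_X]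
          have hempty : Q.filter (fun i => i ≤ 0) = ∅ := by
            rw [Finset.filter_eq_empty_iff]
            intro i hi
            have := hQpos i hi; omega
          rw [hempty]
          simp [hTq, hQpos]
          intro h
          exact absurd (hQpos 0 h) (lt_irrefl 0)
        | succ k =>
          rw [PowerSeries.coeff_succ_mul_X, PowerSeries.coeff_mk]
          have hsum : ∑ i ∈ Q.filter (fun i => i ≤ k + 1), Tq (k + 1 - i) =
              (∑ q ∈ Q.filter (· ≤ k), ((Ww Q (k+1-q)).card : ℚ))
                + (if k+1 ∈ Q then (1:ℚ) else 0) := by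
            by_cases h : k + 1 ∈ Q
            · have hins : Q.filter (fun i => i ≤ k + 1) = insert (k+1) (Q.filter (· ≤ k)) := by
                ext i
                simp only [Finset.mem_filter, Finset.mem_insert]
                constructor
                · rintro ⟨hiQ, hile⟩
                  rcases Nat.lt_or_ge i (k+1) with h' | h'
                  · exact Or.inr ⟨hiQ, by omega⟩
                  · exact Or.inl (by omega)
                · rintro (rfl | ⟨hiQ, hile⟩)
                  · exact ⟨h, le_refl _⟩
                  · exact ⟨hiQ, by omega⟩
              have hnotmem : k + 1 ∉ Q.filter (· ≤ k) := by
                simp only [Finset.mem_filter]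
                rintro ⟨-, h2⟩
                omega
              rw [hins, Finset.sum_insert hnotmem, if_pos h]
              have : Tq (k + 1 - (k+1)) = 1 := by simp [hTq]
              rw [this]
              rw [add_comm]
              congr 1
              apply Finset.sum_congr rfl
              intro i hi
              have hile : i ≤ k := (Finset.mem_filter.mp hi).2
              simp only [hTq]
              rw [if_neg (by omega)]
            · have heq : Q.filter (fun i => i ≤ k + 1) = Q.filter (· ≤ k) := by
                ext i
                simp only [Finset.mem_filter]
                constructor
                · rintro ⟨hiQ, hile⟩
                  refine ⟨hiQ, ?_⟩
                  rcases Nat.lt_or_ge i (k+1) with h' | h'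
                  · omega
                  · exact absurd (by omega : i = k+1) (fun he => h (he ▸ hiQ))
                · rintro ⟨hiQ, hile⟩
                  exact ⟨hiQ, by omega⟩
              rw [heq, if_neg h, add_zero]
              apply Finset.sum_congr rfl
              intro i hi
              have hile : i ≤ k := (Finset.mem_filter.mp hi).2
              simp only [hTq]
              rw [if_neg (by omega)]
          rw [hsum]
          have hB := recB k
          have hT : Tq (k+1) = ((Ww Q (k+1)).card : ℚ) := by simp [hTq]
          rw [hT]
          have hBq : ((S k : ℚ)) = ((Ww Q (k+1)).card : ℚ)
              + ∑ q ∈ Q.filter (· ≤ k), ((Ww Q (k+1-q)).card : ℚ) := by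
            rw [hB]; push_cast; ring
          rw [hBq]
          simp only [Nat.succ_ne_zero, if_false]
          ring
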